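/- (Scalar case p = 1 of Theorem 2.3, k = 2.) Let (X₁, X₂) have joint density on (0,∞)² proportional to x₁^{α₁−1} x₂^{α₂−1} (1+x₂)^{β₁} (1+x₁+x₂)^{−(α₁+α₂+α₃+β₁+β₂)}. Then Z₁ = (1+X₂)/(1+X₁+X₂) and Z₂ = 1/(1+X₂) are independent, with Z₁ ~ Beta(α₂+α₃+β₁+β₂, α₁) and Z₂ ~ Beta(α₃+β₂, α₂). -/

import Mathlib

open MeasureTheory Real Set

section Aux

lemma complex_eq_real_beta' {a b x : ℝ} (hx0 : 0 ≤ x) (hx1 : x ≤ 1) :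
    (x : ℂ) ^ ((a : ℂ) - 1) * ((1 : ℂ) - x) ^ ((b : ℂ) - 1)
      = ((x ^ (a - 1) * (1 - x) ^ (b - 1) : ℝ) : ℂ) := by
  have h1 : (0:ℝ) ≤ 1 - x := by linarith
  rw [Complex.ofReal_mul, Complex.ofReal_cpow hx0, Complex.ofReal_cpow h1]
  push_cast
  ring

lemma beta_integrableOn' {a b : ℝ} (ha : 0 < a) (hb : 0 < b) :
    IntegrableOn (fun y : ℝ => y ^ (a - 1) * (1 - y) ^ (b - 1)) (Ioc 0 1) := by
  have hC : IntervalIntegrable (fun x : ℝ => (x : ℂ) ^ ((a : ℂ) - 1) * ((1 : ℂ) - x) ^ ((b : ℂ) - 1))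
      volume 0 1 := Complex.betaIntegral_convergent (by simpa using ha) (by simpa using hb)
  have hCI : IntegrableOn (fun x : ℝ => (x : ℂ) ^ ((a : ℂ) - 1) * ((1 : ℂ) - x) ^ ((b : ℂ) - 1))
      (Ioc (0:ℝ) 1) := by
    rwa [intervalIntegrable_iff_integrableOn_Ioc_of_le zero_le_one] at hC
  have h := hCI.re
  refine (integrableOn_congr_fun ?_ measurableSet_Ioc).mp h
  intro x hx
  have := complex_eq_real_beta' (a := a) (b := b) (le_of_lt hx.1) hx.2
  simp [this]

lemma beta_integral_Ioo' {a b : ℝ} (ha : 0 < a) (hb : 0 < b) :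
    ∫ y in Ioo (0:ℝ) 1, y ^ (a - 1) * (1 - y) ^ (b - 1)
      = Gamma a * Gamma b / Gamma (a + b) := by
  have hG := Complex.Gamma_mul_Gamma_eq_betaIntegral (s := (a:ℂ)) (t := (b:ℂ))
    (by simpa using ha) (by simpa using hb)
  have hbi : Complex.betaIntegral (a:ℂ) (b:ℂ)
      = ((∫ y in Ioo (0:ℝ) 1, y ^ (a - 1) * (1 - y) ^ (b - 1) : ℝ) : ℂ) := by
    rw [Complex.betaIntegral]
    rw [show (∫ x in (0:ℝ)..1, (x:ℂ) ^ ((a:ℂ) - 1) * ((1:ℂ) - x) ^ ((b:ℂ) - 1))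
        = ∫ x in (0:ℝ)..1, ((x ^ (a - 1) * (1 - x) ^ (b - 1) : ℝ) : ℂ) from
      intervalIntegral.integral_congr (fun x hx => by
        rw [uIcc_of_le zero_le_one] at hx
        exact complex_eq_real_beta' hx.1 hx.2)]
    rw [intervalIntegral.integral_ofReal]
    norm_cast
    rw [intervalIntegral.integral_of_le zero_le_one, integral_Ioc_eq_integral_Ioo]
  rw [hbi, ← Complex.ofReal_add, Complex.Gamma_ofReal, Complex.Gamma_ofReal,
    Complex.Gamma_ofReal, ← Complex.ofReal_mul, ← Complex.ofReal_mul] at hG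
  have h2 := Complex.ofReal_inj.mp hG
  have hG0 : Gamma (a + b) ≠ 0 := (Gamma_pos_of_pos (by linarith)).ne'
  field_simp
  linarith [h2]

lemma beta_lintegral' {a b : ℝ} (ha : 0 < a) (hb : 0 < b) :
    ∫⁻ y in Ioo (0:ℝ) 1, ENNReal.ofReal (y ^ (a - 1) * (1 - y) ^ (b - 1))
      = ENNReal.ofReal (Gamma a * Gamma b / Gamma (a + b)) := by
  rw [← beta_integral_Ioo' ha hb]
  rw [← ofReal_integral_eq_lintegral_ofReal
    ((beta_integrableOn' ha hb).mono_set Ioo_subset_Ioc_self)]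
  filter_upwards [ae_restrict_mem measurableSet_Ioo] with y hy
  have h1 : (0:ℝ) < 1 - y := by linarith [hy.2]
  have h0 : (0:ℝ) < y := hy.1
  positivity

lemma withDensity_prod_withDensity' (f g : ℝ → ℝ) (hf : Measurable f) (hg : Measurable g) :
    (volume.withDensity (fun x => ENNReal.ofReal (f x))).prod
        (volume.withDensity (fun y => ENNReal.ofReal (g y)))
      = (volume : Measure (ℝ × ℝ)).withDensity
          (fun z => ENNReal.ofReal (f z.1) * ENNReal.ofReal (g z.2)) := by
  refine Measure.prod_eq (fun s t hs ht => ?_)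
  rw [withDensity_apply _ (hs.prod ht), Measure.volume_eq_prod, ← Measure.prod_restrict,
    lintegral_prod_mul (f := fun x => ENNReal.ofReal (f x))
      (g := fun y => ENNReal.ofReal (g y)) (by fun_prop) (by fun_prop),
    withDensity_apply _ hs, withDensity_apply _ ht]

lemma hasFDerivAt_T' (p : ℝ × ℝ) (hu : 1 + p.1 + p.2 ≠ 0) (hv : 1 + p.2 ≠ 0) :
    HasFDerivAt (fun x : ℝ × ℝ => ((1 + x.2) / (1 + x.1 + x.2), 1 / (1 + x.2)))
      (LinearMap.toContinuousLinearMap (Matrix.toLin (Module.Basis.finTwoProd ℝ) (Module.Basis.finTwoProd ℝ)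
        !![-(1 + p.2) / (1 + p.1 + p.2) ^ 2, p.1 / (1 + p.1 + p.2) ^ 2;
           0, -1 / (1 + p.2) ^ 2])) p := by
  have h_num : HasFDerivAt (fun x : ℝ × ℝ => 1 + x.2)
      (ContinuousLinearMap.snd ℝ ℝ ℝ) p := (hasFDerivAt_snd).const_add 1
  have h_den : HasFDerivAt (fun x : ℝ × ℝ => 1 + x.1 + x.2)
      (ContinuousLinearMap.fst ℝ ℝ ℝ + ContinuousLinearMap.snd ℝ ℝ ℝ) p :=
    ((hasFDerivAt_fst).const_add 1).add hasFDerivAt_snd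
  have hinvden : HasFDerivAt (fun x : ℝ × ℝ => (1 + x.1 + x.2)⁻¹)
      ((-((1 + p.1 + p.2) ^ 2)⁻¹) •
        (ContinuousLinearMap.fst ℝ ℝ ℝ + ContinuousLinearMap.snd ℝ ℝ ℝ)) p :=
    (hasDerivAt_inv hu).comp_hasFDerivAt p h_den
  have hinv2 : HasFDerivAt (fun x : ℝ × ℝ => (1 + x.2)⁻¹)
      ((-((1 + p.2) ^ 2)⁻¹) • (ContinuousLinearMap.snd ℝ ℝ ℝ)) p :=
    (hasDerivAt_inv hv).comp_hasFDerivAt p h_num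
  have h1 := h_num.mul hinvden
  have h := h1.prodMk hinv2
  rw [Matrix.toLin_finTwoProd_toContinuousLinearMap]
  simp only [div_eq_mul_inv, one_mul]
  refine h.congr_fderiv ?_
  refine ContinuousLinearMap.ext fun w => Prod.ext ?_ ?_ <;>
    (simp [smul_eq_mul]; try field_simp; try ring)

lemma key_identity' {α₁ α₂ α₃ β₁ β₂ x₁ x₂ : ℝ} (hx₁ : 0 < x₁) (hx₂ : 0 < x₂) :
    1 / ((1 + x₁ + x₂) ^ 2 * (1 + x₂)) *
      (((1 + x₂) / (1 + x₁ + x₂)) ^ (α₂ + α₃ + β₁ + β₂ - 1) *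
        (1 - (1 + x₂) / (1 + x₁ + x₂)) ^ (α₁ - 1)) *
      ((1 / (1 + x₂)) ^ (α₃ + β₂ - 1) * (1 - 1 / (1 + x₂)) ^ (α₂ - 1))
    = x₁ ^ (α₁ - 1) * x₂ ^ (α₂ - 1) * (1 + x₂) ^ β₁ *
        (1 + x₁ + x₂) ^ (-(α₁ + α₂ + α₃ + β₁ + β₂)) := by
  have hu : (0:ℝ) < 1 + x₁ + x₂ := by linarith
  have hv : (0:ℝ) < 1 + x₂ := by linarith
  have e1 : 1 - (1 + x₂) / (1 + x₁ + x₂) = x₁ / (1 + x₁ + x₂) := by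
    field_simp
    ring
  have e2 : 1 - 1 / (1 + x₂) = x₂ / (1 + x₂) := by
    field_simp
    ring
  rw [e1, e2]
  have hL : (0:ℝ) < 1 / ((1 + x₁ + x₂) ^ 2 * (1 + x₂)) *
      (((1 + x₂) / (1 + x₁ + x₂)) ^ (α₂ + α₃ + β₁ + β₂ - 1) *
        (x₁ / (1 + x₁ + x₂)) ^ (α₁ - 1)) *
      ((1 / (1 + x₂)) ^ (α₃ + β₂ - 1) * (x₂ / (1 + x₂)) ^ (α₂ - 1)) := by positivity
  have hR : (0:ℝ) < x₁ ^ (α₁ - 1) * x₂ ^ (α₂ - 1) * (1 + x₂) ^ β₁ *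
      (1 + x₁ + x₂) ^ (-(α₁ + α₂ + α₃ + β₁ + β₂)) := by positivity
  have hlog : Real.log (1 / ((1 + x₁ + x₂) ^ 2 * (1 + x₂)) *
      (((1 + x₂) / (1 + x₁ + x₂)) ^ (α₂ + α₃ + β₁ + β₂ - 1) *
        (x₁ / (1 + x₁ + x₂)) ^ (α₁ - 1)) *
      ((1 / (1 + x₂)) ^ (α₃ + β₂ - 1) * (x₂ / (1 + x₂)) ^ (α₂ - 1)))
      = Real.log (x₁ ^ (α₁ - 1) * x₂ ^ (α₂ - 1) * (1 + x₂) ^ β₁ *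
        (1 + x₁ + x₂) ^ (-(α₁ + α₂ + α₃ + β₁ + β₂))) := by
    rw [Real.log_mul (by positivity) (by positivity),
      Real.log_mul (by positivity) (by positivity),
      Real.log_mul (by positivity) (by positivity),
      Real.log_mul (by positivity) (by positivity),
      Real.log_mul (by positivity) (by positivity),
      Real.log_mul (by positivity) (by positivity),
      Real.log_mul (by positivity) (by positivity),
      Real.log_div (by positivity) (by positivity),
      Real.log_mul (by positivity) (by positivity),
      Real.log_rpow (by positivity), Real.log_rpow (by positivity),
      Real.log_rpow (by positivity), Real.log_rpow (by positivity),
      Real.log_rpow hx₁, Real.log_rpow hx₂, Real.log_rpow hv, Real.log_rpow hu,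
      Real.log_div (by positivity) (by positivity),
      Real.log_div (by positivity) (by positivity),
      Real.log_div (by positivity) (by positivity),
      Real.log_div (by positivity) (by positivity),
      Real.log_pow, Real.log_one]
    push_cast
    ring
  exact Real.log_injOn_pos (mem_Ioi.mpr hL) (mem_Ioi.mpr hR) hlog

lemma injOn_T' : InjOn (fun x : ℝ × ℝ => ((1 + x.2) / (1 + x.1 + x.2), 1 / (1 + x.2)))
    (Ioi (0:ℝ) ×ˢ Ioi (0:ℝ)) := by
  rintro ⟨x₁, x₂⟩ ⟨hx₁, hx₂⟩ ⟨y₁, y₂⟩ ⟨hy₁, hy₂⟩ h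
  simp only [Prod.mk.injEq] at h
  simp only [mem_Ioi] at hx₁ hx₂ hy₁ hy₂
  obtain ⟨h1, h2⟩ := h
  have hvx : (0:ℝ) < 1 + x₂ := by linarith
  have hvy : (0:ℝ) < 1 + y₂ := by linarith
  have hux : (0:ℝ) < 1 + x₁ + x₂ := by linarith
  have huy : (0:ℝ) < 1 + y₁ + y₂ := by linarith
  have e2 : x₂ = y₂ := by
    field_simp at h2
    linarith
  subst e2
  suffices e1 : x₁ = y₁ by simp [e1]
  field_simp at h1
  linarith

lemma image_T' : (fun x : ℝ × ℝ => ((1 + x.2) / (1 + x.1 + x.2), 1 / (1 + x.2))) ''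
    (Ioi (0:ℝ) ×ˢ Ioi (0:ℝ)) = Ioo (0:ℝ) 1 ×ˢ Ioo (0:ℝ) 1 := by
  ext ⟨z₁, z₂⟩
  simp only [mem_image, mem_prod, mem_Ioi, mem_Ioo, Prod.exists, Prod.mk.injEq]
  constructor
  · rintro ⟨x₁, x₂, ⟨hx₁, hx₂⟩, h1, h2⟩
    have hv : (0:ℝ) < 1 + x₂ := by linarith
    have hu : (0:ℝ) < 1 + x₁ + x₂ := by linarith
    subst h1 h2
    refine ⟨⟨by positivity, ?_⟩, by positivity, ?_⟩
    · rw [div_lt_one hu]; linarith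
    · rw [div_lt_one hv]; linarith
  · rintro ⟨⟨hz₁, hz₁'⟩, hz₂, hz₂'⟩
    have hz1' : (0:ℝ) < 1 - z₁ := by linarith
    refine ⟨(1 - z₁) / (z₁ * z₂), 1 / z₂ - 1, ⟨by positivity, ?_⟩, ?_, ?_⟩
    · rw [sub_pos, lt_div_iff₀ hz₂]; linarith
    · have h : 1 + ((1 - z₁) / (z₁ * z₂)) + (1 / z₂ - 1) = 1 / (z₁ * z₂) := by
        field_simp
        ring
      rw [h]
      have h2 : 1 + (1 / z₂ - 1) = 1 / z₂ := by ring
      rw [h2]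
      field_simp
    · field_simp
      ring

lemma det_T' (p : ℝ × ℝ) :
    (LinearMap.toContinuousLinearMap (Matrix.toLin (Module.Basis.finTwoProd ℝ) (Module.Basis.finTwoProd ℝ)
        !![-(1 + p.2) / (1 + p.1 + p.2) ^ 2, p.1 / (1 + p.1 + p.2) ^ 2;
           0, -1 / (1 + p.2) ^ 2])).det
      = (1 + p.2) / (1 + p.1 + p.2) ^ 2 * (1 / (1 + p.2) ^ 2) := by
  rw [ContinuousLinearMap.det, LinearMap.coe_toContinuousLinearMap, LinearMap.det_toLin,
    Matrix.det_fin_two_of]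
  ring

end Aux

noncomputable def Tder' (x : ℝ × ℝ) : (ℝ × ℝ) →L[ℝ] (ℝ × ℝ) :=
  LinearMap.toContinuousLinearMap (Matrix.toLin (Module.Basis.finTwoProd ℝ) (Module.Basis.finTwoProd ℝ)
    !![-(1 + x.2) / (1 + x.1 + x.2) ^ 2, x.1 / (1 + x.1 + x.2) ^ 2;
       0, -1 / (1 + x.2) ^ 2])

lemma push_lemma' {φ : ℝ × ℝ → ℝ} {g : ℝ × ℝ → ENNReal}
    (hsupp : ∀ z : ℝ × ℝ, z ∉ Ioo (0:ℝ) 1 ×ˢ Ioo (0:ℝ) 1 → g z = 0)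
    (hpt : ∀ x : ℝ × ℝ, x ∈ Ioi (0:ℝ) ×ˢ Ioi (0:ℝ) →
      ENNReal.ofReal (φ x) = ENNReal.ofReal |(Tder' x).det| *
        g ((1 + x.2) / (1 + x.1 + x.2), 1 / (1 + x.2)))
    {A : Set (ℝ × ℝ)} (hA : MeasurableSet A) :
    ∫⁻ x in (fun x : ℝ × ℝ => ((1 + x.2) / (1 + x.1 + x.2), 1 / (1 + x.2))) ⁻¹' A,
        ENNReal.ofReal ((Ioi (0:ℝ) ×ˢ Ioi (0:ℝ)).indicator φ x)
      = ∫⁻ z in A, g z := by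
  have hS : MeasurableSet (Ioi (0:ℝ) ×ˢ Ioi (0:ℝ)) := measurableSet_Ioi.prod measurableSet_Ioi
  have hTmeas : Measurable (fun x : ℝ × ℝ => ((1 + x.2) / (1 + x.1 + x.2), 1 / (1 + x.2))) := by
    fun_prop
  have hder : ∀ x ∈ (Ioi (0:ℝ) ×ˢ Ioi (0:ℝ)),
      HasFDerivWithinAt (fun x : ℝ × ℝ => ((1 + x.2) / (1 + x.1 + x.2), 1 / (1 + x.2)))
        (Tder' x) (Ioi (0:ℝ) ×ˢ Ioi (0:ℝ)) x := by
    rintro x ⟨hx1, hx2⟩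
    simp only [mem_Ioi] at hx1 hx2
    exact (hasFDerivAt_T' x (by dsimp; linarith) (by dsimp; linarith)).hasFDerivWithinAt
  calc ∫⁻ x in (fun x : ℝ × ℝ => ((1 + x.2) / (1 + x.1 + x.2), 1 / (1 + x.2))) ⁻¹' A,
        ENNReal.ofReal ((Ioi (0:ℝ) ×ˢ Ioi (0:ℝ)).indicator φ x)
      = ∫⁻ x, (Ioi (0:ℝ) ×ˢ Ioi (0:ℝ)).indicator
          (fun x => ENNReal.ofReal (φ x) *
            A.indicator 1 ((1 + x.2) / (1 + x.1 + x.2), 1 / (1 + x.2))) x := by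
        rw [← lintegral_indicator (hTmeas hA)]
        congr 1
        ext x
        by_cases hxA : ((1 + x.2) / (1 + x.1 + x.2), 1 / (1 + x.2)) ∈ A
        · rw [Set.indicator_of_mem
            (show x ∈ (fun x : ℝ × ℝ => ((1 + x.2) / (1 + x.1 + x.2), 1 / (1 + x.2))) ⁻¹' A
              from Set.mem_preimage.mpr hxA)]
          by_cases hxS : x ∈ Ioi (0:ℝ) ×ˢ Ioi (0:ℝ)
          · rw [Set.indicator_of_mem hxS, Set.indicator_of_mem hxS, Set.indicator_of_mem hxA,
              Pi.one_apply, mul_one]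
          · rw [Set.indicator_of_notMem hxS, Set.indicator_of_notMem hxS, ENNReal.ofReal_zero]
        · rw [Set.indicator_of_notMem
            (show x ∉ (fun x : ℝ × ℝ => ((1 + x.2) / (1 + x.1 + x.2), 1 / (1 + x.2))) ⁻¹' A
              from fun hmem => hxA (Set.mem_preimage.mp hmem))]
          by_cases hxS : x ∈ Ioi (0:ℝ) ×ˢ Ioi (0:ℝ)
          · rw [Set.indicator_of_mem hxS, Set.indicator_of_notMem hxA, mul_zero]
          · rw [Set.indicator_of_notMem hxS]
    _ = ∫⁻ x in Ioi (0:ℝ) ×ˢ Ioi (0:ℝ), ENNReal.ofReal (φ x) *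
          A.indicator 1 ((1 + x.2) / (1 + x.1 + x.2), 1 / (1 + x.2)) :=
        lintegral_indicator hS _
    _ = ∫⁻ x in Ioi (0:ℝ) ×ˢ Ioi (0:ℝ), ENNReal.ofReal |(Tder' x).det| *
          ((fun z => g z * A.indicator 1 z) ((1 + x.2) / (1 + x.1 + x.2), 1 / (1 + x.2))) := by
        refine setLIntegral_congr_fun hS (fun x hx => ?_)
        rw [hpt x hx]
        dsimp only
        ring
    _ = ∫⁻ z in (fun x : ℝ × ℝ => ((1 + x.2) / (1 + x.1 + x.2), 1 / (1 + x.2))) ''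
          (Ioi (0:ℝ) ×ˢ Ioi (0:ℝ)), g z * A.indicator 1 z :=
        (lintegral_image_eq_lintegral_abs_det_fderiv_mul volume hS hder injOn_T'
          (fun z => g z * A.indicator 1 z)).symm
    _ = ∫⁻ z, g z * A.indicator 1 z := by
        rw [image_T', ← lintegral_indicator (measurableSet_Ioo.prod measurableSet_Ioo)]
        congr 1
        ext z
        by_cases hz : z ∈ Ioo (0:ℝ) 1 ×ˢ Ioo (0:ℝ) 1
        · simp [hz]
        · simp [hz, hsupp z hz]
    _ = ∫⁻ z in A, g z := by
        rw [← lintegral_indicator hA]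
        congr 1
        ext z
        by_cases hz : z ∈ A <;> simp [hz]



/-- The Beta(a,b) distribution on (0,1). -/
noncomputable def betaMeasure (a b : ℝ) : Measure ℝ :=
  volume.withDensity fun y => ENNReal.ofReal
    ((Ioo (0 : ℝ) 1).indicator
      (fun y => y ^ (a - 1) * (1 - y) ^ (b - 1) / (Gamma a * Gamma b / Gamma (a + b))) y)

lemma betaMeasure_isProbabilityMeasure {a b : ℝ} (ha : 0 < a) (hb : 0 < b) :
    IsProbabilityMeasure (betaMeasure a b) := by
  constructor
  rw [betaMeasure, withDensity_apply _ MeasurableSet.univ, Measure.restrict_univ]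
  have hB : 0 < Gamma a * Gamma b / Gamma (a + b) := by
    have := Gamma_pos_of_pos ha
    have := Gamma_pos_of_pos hb
    have := Gamma_pos_of_pos (show 0 < a + b by linarith)
    positivity
  calc (∫⁻ y, ENNReal.ofReal ((Ioo (0 : ℝ) 1).indicator (fun y => y ^ (a - 1) * (1 - y) ^ (b - 1) / (Gamma a * Gamma b / Gamma (a + b))) y))
      = ∫⁻ y in Ioo (0:ℝ) 1, ENNReal.ofReal (y ^ (a - 1) * (1 - y) ^ (b - 1) / (Gamma a * Gamma b / Gamma (a + b))) := by
        rw [← lintegral_indicator measurableSet_Ioo]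
        congr 1
        ext y
        by_cases hy : y ∈ Ioo (0:ℝ) 1 <;> simp [hy]
    _ = ∫⁻ y in Ioo (0:ℝ) 1, ENNReal.ofReal (y ^ (a - 1) * (1 - y) ^ (b - 1)) * ENNReal.ofReal (Gamma a * Gamma b / Gamma (a + b))⁻¹ := by
        congr 1; ext y
        rw [div_eq_mul_inv, ENNReal.ofReal_mul']
        positivity
    _ = 1 := by
        rw [lintegral_mul_const _ (by fun_prop),
          beta_lintegral' ha hb, ← ENNReal.ofReal_mul hB.le, mul_inv_cancel₀ hB.ne',
          ENNReal.ofReal_one]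

/-- Scalar case (p = 1, k = 2) of Theorem 2.3: if `(X₁, X₂)` has joint density
proportional to `x₁^{α₁−1} x₂^{α₂−1} (1+x₂)^{β₁} (1+x₁+x₂)^{−(α₁+α₂+α₃+β₁+β₂)}` on
`(0,∞)²`, then `Z₁ = (1+X₂)/(1+X₁+X₂)` and `Z₂ = 1/(1+X₂)` are independent with
`Z₁ ~ Beta(α₂+α₃+β₁+β₂, α₁)` and `Z₂ ~ Beta(α₃+β₂, α₂)`. -/
theorem type2_dirichlet_to_beta_indep' {α₁ α₂ α₃ β₁ β₂ c : ℝ}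
    (h₁ : 0 < α₁) (h₂ : 0 < α₂) (h₃ : 0 < α₂ + α₃ + β₁ + β₂) (h₄ : 0 < α₃ + β₂)
    (hc : 0 < c) (μ : Measure (ℝ × ℝ))
    (hμ : μ = volume.withDensity fun x => ENNReal.ofReal
      ((Ioi (0 : ℝ) ×ˢ Ioi (0 : ℝ)).indicator
        (fun x => c * x.1 ^ (α₁ - 1) * x.2 ^ (α₂ - 1) * (1 + x.2) ^ β₁ *
          (1 + x.1 + x.2) ^ (-(α₁ + α₂ + α₃ + β₁ + β₂))) x))
    (hprob : IsProbabilityMeasure μ) :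
    Measure.map (fun x : ℝ × ℝ => ((1 + x.2) / (1 + x.1 + x.2), 1 / (1 + x.2))) μ =
      (betaMeasure (α₂ + α₃ + β₁ + β₂) α₁).prod (betaMeasure (α₃ + β₂) α₂) := by
  classical
  have hTmeas : Measurable (fun x : ℝ × ℝ => ((1 + x.2) / (1 + x.1 + x.2), 1 / (1 + x.2))) := by
    fun_prop
  have hG1 := Gamma_pos_of_pos h₁
  have hG2 := Gamma_pos_of_pos h₂
  have hG3 := Gamma_pos_of_pos h₃
  have hG4 := Gamma_pos_of_pos h₄
  have hG5 := Gamma_pos_of_pos (show (0:ℝ) < α₂ + α₃ + β₁ + β₂ + α₁ by linarith)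
  have hG6 := Gamma_pos_of_pos (show (0:ℝ) < α₃ + β₂ + α₂ by linarith)
  have hB₁ : 0 < Gamma (α₂ + α₃ + β₁ + β₂) * Gamma α₁ / Gamma (α₂ + α₃ + β₁ + β₂ + α₁) := by
    positivity
  have hB₂ : 0 < Gamma (α₃ + β₂) * Gamma α₂ / Gamma (α₃ + β₂ + α₂) := by positivity
  have hI₁ : Measurable (fun y : ℝ => (Ioo (0:ℝ) 1).indicator
      (fun y => y ^ (α₂ + α₃ + β₁ + β₂ - 1) * (1 - y) ^ (α₁ - 1) /
        (Gamma (α₂ + α₃ + β₁ + β₂) * Gamma α₁ / Gamma (α₂ + α₃ + β₁ + β₂ + α₁))) y) :=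
    Measurable.indicator (by fun_prop) measurableSet_Ioo
  have hI₂ : Measurable (fun y : ℝ => (Ioo (0:ℝ) 1).indicator
      (fun y => y ^ (α₃ + β₂ - 1) * (1 - y) ^ (α₂ - 1) /
        (Gamma (α₃ + β₂) * Gamma α₂ / Gamma (α₃ + β₂ + α₂))) y) :=
    Measurable.indicator (by fun_prop) measurableSet_Ioo
  have hprod : (betaMeasure (α₂ + α₃ + β₁ + β₂) α₁).prod (betaMeasure (α₃ + β₂) α₂)
      = (volume : Measure (ℝ × ℝ)).withDensity (fun z =>
          ENNReal.ofReal ((Ioo (0:ℝ) 1).indicator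
            (fun y => y ^ (α₂ + α₃ + β₁ + β₂ - 1) * (1 - y) ^ (α₁ - 1) /
              (Gamma (α₂ + α₃ + β₁ + β₂) * Gamma α₁ / Gamma (α₂ + α₃ + β₁ + β₂ + α₁))) z.1) *
          ENNReal.ofReal ((Ioo (0:ℝ) 1).indicator
            (fun y => y ^ (α₃ + β₂ - 1) * (1 - y) ^ (α₂ - 1) /
              (Gamma (α₃ + β₂) * Gamma α₂ / Gamma (α₃ + β₂ + α₂))) z.2)) := by
    rw [betaMeasure, betaMeasure, withDensity_prod_withDensity' _ _ hI₁ hI₂]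
  set B₁ := Gamma (α₂ + α₃ + β₁ + β₂) * Gamma α₁ / Gamma (α₂ + α₃ + β₁ + β₂ + α₁) with hB₁def
  set B₂ := Gamma (α₃ + β₂) * Gamma α₂ / Gamma (α₃ + β₂ + α₂) with hB₂def
  set G : ℝ × ℝ → ENNReal := fun z =>
      ENNReal.ofReal ((Ioo (0:ℝ) 1).indicator
        (fun y => y ^ (α₂ + α₃ + β₁ + β₂ - 1) * (1 - y) ^ (α₁ - 1) / B₁) z.1) *
      ENNReal.ofReal ((Ioo (0:ℝ) 1).indicator
        (fun y => y ^ (α₃ + β₂ - 1) * (1 - y) ^ (α₂ - 1) / B₂) z.2) with hGdef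
  have hGmeas : Measurable G := (hI₁.ennreal_ofReal.comp measurable_fst).mul
    (hI₂.ennreal_ofReal.comp measurable_snd)
  have hsupp : ∀ z : ℝ × ℝ, z ∉ Ioo (0:ℝ) 1 ×ˢ Ioo (0:ℝ) 1 →
      ENNReal.ofReal (c * (B₁ * B₂)) * G z = 0 := by
    intro z hz
    rw [mem_prod, not_and_or] at hz
    rcases hz with hz | hz
    · simp [hGdef, Set.indicator_of_notMem hz]
    · simp [hGdef, Set.indicator_of_notMem hz]
  have hpt : ∀ x : ℝ × ℝ, x ∈ Ioi (0:ℝ) ×ˢ Ioi (0:ℝ) →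
      ENNReal.ofReal (c * x.1 ^ (α₁ - 1) * x.2 ^ (α₂ - 1) * (1 + x.2) ^ β₁ *
          (1 + x.1 + x.2) ^ (-(α₁ + α₂ + α₃ + β₁ + β₂)))
        = ENNReal.ofReal |(Tder' x).det| *
          ((fun z => ENNReal.ofReal (c * (B₁ * B₂)) * G z)
            ((1 + x.2) / (1 + x.1 + x.2), 1 / (1 + x.2))) := by
    rintro ⟨x₁, x₂⟩ ⟨hx₁, hx₂⟩
    simp only [mem_Ioi] at hx₁ hx₂
    have hv : (0:ℝ) < 1 + x₂ := by linarith
    have hu : (0:ℝ) < 1 + x₁ + x₂ := by linarith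
    have hz₁ : (1 + x₂) / (1 + x₁ + x₂) ∈ Ioo (0:ℝ) 1 := by
      constructor
      · positivity
      · rw [div_lt_one hu]; linarith
    have hz₂ : 1 / (1 + x₂) ∈ Ioo (0:ℝ) 1 := by
      constructor
      · positivity
      · rw [div_lt_one hv]; linarith
    have hdet : |(Tder' (x₁, x₂)).det| = 1 / ((1 + x₁ + x₂) ^ 2 * (1 + x₂)) := by
      rw [Tder', det_T']
      dsimp only
      rw [abs_of_pos (by positivity)]
      field_simp
    have hzz₁ : (0:ℝ) ≤ 1 - (1 + x₂) / (1 + x₁ + x₂) := by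
      have := hz₁.2; linarith
    have hzz₂ : (0:ℝ) ≤ 1 - 1 / (1 + x₂) := by
      have := hz₂.2; linarith
    have hI₁nn : (0:ℝ) ≤ ((1 + x₂) / (1 + x₁ + x₂)) ^ (α₂ + α₃ + β₁ + β₂ - 1) *
        (1 - (1 + x₂) / (1 + x₁ + x₂)) ^ (α₁ - 1) / B₁ :=
      div_nonneg (mul_nonneg (rpow_nonneg (by positivity) _) (rpow_nonneg hzz₁ _)) hB₁.le
    simp only [hGdef]
    rw [Set.indicator_of_mem hz₁, Set.indicator_of_mem hz₂, hdet]
    rw [← ENNReal.ofReal_mul hI₁nn,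
      ← ENNReal.ofReal_mul (show (0:ℝ) ≤ c * (B₁ * B₂) by positivity),
      ← ENNReal.ofReal_mul (show (0:ℝ) ≤ 1 / ((1 + x₁ + x₂) ^ 2 * (1 + x₂)) by positivity)]
    congr 1
    have hkey := key_identity' (α₁ := α₁) (α₂ := α₂) (α₃ := α₃) (β₁ := β₁) (β₂ := β₂) hx₁ hx₂
    calc c * x₁ ^ (α₁ - 1) * x₂ ^ (α₂ - 1) * (1 + x₂) ^ β₁ *
          (1 + x₁ + x₂) ^ (-(α₁ + α₂ + α₃ + β₁ + β₂))
        = c * (1 / ((1 + x₁ + x₂) ^ 2 * (1 + x₂)) *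
            (((1 + x₂) / (1 + x₁ + x₂)) ^ (α₂ + α₃ + β₁ + β₂ - 1) *
              (1 - (1 + x₂) / (1 + x₁ + x₂)) ^ (α₁ - 1)) *
            ((1 / (1 + x₂)) ^ (α₃ + β₂ - 1) * (1 - 1 / (1 + x₂)) ^ (α₂ - 1))) := by
          rw [hkey]; ring
      _ = 1 / ((1 + x₁ + x₂) ^ 2 * (1 + x₂)) * (c * (B₁ * B₂) *
            (((1 + x₂) / (1 + x₁ + x₂)) ^ (α₂ + α₃ + β₁ + β₂ - 1) *
              (1 - (1 + x₂) / (1 + x₁ + x₂)) ^ (α₁ - 1) / B₁ *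
            ((1 / (1 + x₂)) ^ (α₃ + β₂ - 1) * (1 - 1 / (1 + x₂)) ^ (α₂ - 1) / B₂))) := by
          field_simp
  have main : Measure.map (fun x : ℝ × ℝ => ((1 + x.2) / (1 + x.1 + x.2), 1 / (1 + x.2))) μ
      = ENNReal.ofReal (c * (B₁ * B₂)) •
        ((betaMeasure (α₂ + α₃ + β₁ + β₂) α₁).prod (betaMeasure (α₃ + β₂) α₂)) := by
    ext A hA
    rw [Measure.map_apply hTmeas hA, hμ, withDensity_apply _ (hTmeas hA)]
    rw [Measure.smul_apply, hprod, withDensity_apply _ hA, smul_eq_mul]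
    rw [push_lemma' (g := fun z => ENNReal.ofReal (c * (B₁ * B₂)) * G z) hsupp hpt hA]
    rw [lintegral_const_mul _ hGmeas]
  have hP₁ := betaMeasure_isProbabilityMeasure h₃ h₁
  have hP₂ := betaMeasure_isProbabilityMeasure h₄ h₂
  have hν : IsProbabilityMeasure
      ((betaMeasure (α₂ + α₃ + β₁ + β₂) α₁).prod (betaMeasure (α₃ + β₂) α₂)) := by
    exact Measure.prod.instIsProbabilityMeasure _ _
  have hscal : ENNReal.ofReal (c * (B₁ * B₂)) = 1 := by
    have h := congrArg (fun m : Measure (ℝ × ℝ) => m univ) main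
    simp only [Measure.smul_apply, smul_eq_mul] at h
    rw [Measure.map_apply hTmeas MeasurableSet.univ, preimage_univ, measure_univ,
      measure_univ, mul_one] at h
    exact h.symm
  rw [main, hscal, one_smul]
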